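/- (Vertex filtering correctness) Let f be a monotone increasing score function on ℝ^d, and let τ = min over x of f(w(p^x_{s,e})) where p^x_{s,e} is a shortest path from v_s to v_e under the x-th cost. If a vertex v_i satisfies τ < f(Φ_{s,i} + Φ_{i,e}), where Φ_{s,i} and Φ_{i,e} are the componentwise single-cost shortest distance vectors, then no optimal path (a path minimizing f of its cost vector) from v_s to v_e passes through v_i. -/

import Mathlib

/-- A multi-cost network: a directed graph where every edge carries a
nonnegative cost vector in `ℝ^d`. -/
structure MCN (V : Type) (d : ℕ) where
  E : V → V → Prop
  w : V → V → (Fin d → ℝ)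
  w_nonneg : ∀ u v : V, ∀ i : Fin d, 0 ≤ w u v i

namespace MCN

variable {V : Type} {d : ℕ}

/-- The cost vector of a path (given as its list of vertices):
the componentwise sum of the cost vectors of its edges. -/
def pathCost (G : MCN V d) : List V → (Fin d → ℝ)
  | a :: b :: rest => G.w a b + pathCost G (b :: rest)
  | _ => 0

/-- `p` is a path from `s` to `t` in `G`. -/
def IsPath (G : MCN V d) (s t : V) (p : List V) : Prop :=
  p.head? = some s ∧ p.getLast? = some t ∧ p.Chain' G.E

/-- `u` dominates `v`: componentwise `≤` and not equal. -/
def Dominates (u v : Fin d → ℝ) : Prop := u ≤ v ∧ u ≠ v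

/-- A monotone increasing score function. -/
def Mono (f : (Fin d → ℝ) → ℝ) : Prop :=
  ∀ u v : Fin d → ℝ, u ≤ v → u ≠ v → f u < f v

/-- `φ^x_{s,t}` : the shortest-path distance from `s` to `t` using only the
`x`-th cost component. -/
noncomputable def phi (G : MCN V d) (s t : V) (x : Fin d) : ℝ :=
  sInf {c : ℝ | ∃ p, G.IsPath s t p ∧ G.pathCost p x = c}

/-- The lower-bound vector `Φ_{s,t} = (φ^1_{s,t}, ..., φ^d_{s,t})`. -/
noncomputable def Phi (G : MCN V d) (s t : V) : Fin d → ℝ :=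
  fun x => G.phi s t x

end MCN


namespace MCN

lemma pathCost_nonneg (G : MCN V d) : ∀ (p : List V) (x : Fin d), 0 ≤ G.pathCost p x
  | [], _ => le_of_eq (by simp [pathCost])
  | [_], _ => le_of_eq (by simp [pathCost])
  | a :: b :: r, x => by
    have h := pathCost_nonneg G (b :: r) x
    simp only [pathCost, Pi.add_apply]
    exact add_nonneg (G.w_nonneg a b x) h

lemma pathCost_split (G : MCN V d) : ∀ (l1 : List V) (v : V) (l2 : List V),
    G.pathCost (l1 ++ v :: l2) = G.pathCost (l1 ++ [v]) + G.pathCost (v :: l2)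
  | [], v, l2 => by simp [pathCost]
  | [a], v, l2 => by
    simp only [List.cons_append, List.nil_append, pathCost]
    abel
  | a :: b :: r, v, l2 => by
    have h := pathCost_split G (b :: r) v l2
    simp only [List.cons_append] at h ⊢
    simp only [pathCost, h]
    abel

end MCN

/-- Vertex filtering correctness: with
`τ = min_x f(w(p^x_{s,e}))` over the single-cost shortest paths `p^x_{s,e}`,
if a vertex `v_i` satisfies `τ < f(Φ_{s,i} + Φ_{i,e})`, then no optimal path
from `v_s` to `v_e` passes through `v_i`. -/
theorem stmt_4 {V : Type} {d : ℕ} [Fintype V] (G : MCN V d)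
    (f : (Fin d → ℝ) → ℝ) (hf : MCN.Mono f) (vs ve : V)
    (px : Fin d → List V)
    (hpx : ∀ x : Fin d, G.IsPath vs ve (px x) ∧ G.pathCost (px x) x = G.phi vs ve x)
    (τ : ℝ) (hτ : IsLeast {y : ℝ | ∃ x : Fin d, y = f (G.pathCost (px x))} τ)
    (vi : V) (hfilter : τ < f (G.Phi vs vi + G.Phi vi ve)) :
    ∀ p : List V, G.IsPath vs ve p →
      (∀ q : List V, G.IsPath vs ve q → f (G.pathCost p) ≤ f (G.pathCost q)) →
      vi ∉ p := by
  intro p hp hopt hmem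
  obtain ⟨l1, l2, rfl⟩ := List.append_of_mem hmem
  obtain ⟨hh, hl, hc⟩ := hp
  unfold List.Chain' at hc
  rw [List.isChain_split] at hc
  have h1 : G.IsPath vs vi (l1 ++ [vi]) := by
    refine ⟨?_, List.getLast?_concat, hc.1⟩
    cases l1 with
    | nil => simpa using hh
    | cons a t => simpa using hh
  have h2 : G.IsPath vi ve (vi :: l2) := by
    refine ⟨rfl, ?_, hc.2⟩
    rwa [List.getLast?_append_cons] at hl
  have hbdd : ∀ (u v : V) (x : Fin d), BddBelow {c : ℝ | ∃ q, G.IsPath u v q ∧ G.pathCost q x = c} := by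
    intro u v x
    exact ⟨0, fun c ⟨q, _, hq⟩ => hq ▸ G.pathCost_nonneg q x⟩
  have hle : G.Phi vs vi + G.Phi vi ve ≤ G.pathCost (l1 ++ vi :: l2) := by
    intro x
    rw [G.pathCost_split l1 vi l2]
    exact add_le_add
      (csInf_le (hbdd vs vi x) ⟨l1 ++ [vi], h1, rfl⟩)
      (csInf_le (hbdd vi ve x) ⟨vi :: l2, h2, rfl⟩)
  have hfle : f (G.Phi vs vi + G.Phi vi ve) ≤ f (G.pathCost (l1 ++ vi :: l2)) := by
    rcases eq_or_ne (G.Phi vs vi + G.Phi vi ve) (G.pathCost (l1 ++ vi :: l2)) with h | h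
    · exact le_of_eq (congrArg f h)
    · exact le_of_lt (hf _ _ hle h)
  obtain ⟨x, hx⟩ := hτ.1
  have := hopt (px x) (hpx x).1
  rw [← hx] at this
  linarith
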